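/- Uniform boundedness of the scaled interpolation (Lemma 'bound x̂'). Assume there is a constant C_H ≥ 0 such that (i) sup_{c≥1} sup_n sup_{0 ≤ t₁ ≤ t₂ ≤ T_{n+1}−T_n} ‖∑_{i=m(T_n+t₁)}^{m(T_n+t₂)−1} α(i)·H_c(0, Y_{i+1})‖ ≤ C_H, and (ii) sup_n sup_{0 ≤ t₁ ≤ t₂ ≤ T_{n+1}−T_n} ∑_{i=m(T_n+t₁)}^{m(T_n+t₂)−1} α(i)·L(Y_{i+1}) ≤ C_H. Then sup_n sup_{t ∈ [0, T)} ‖x̂(T_n + t)‖ ≤ (1 + C_H)·e^{C_H}. -/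
import Mathlib


open Filter

theorem scaled_interpolation_bounded
    {E : Type*} [NormedAddCommGroup E] [NormedSpace ℝ E] [FiniteDimensional ℝ E]
    [Nontrivial E]
    {𝓨 : Type*}
    (α : ℕ → ℝ)
    (hα_pos : ∀ n, 0 < α n)
    (hα_anti : ∀ n, α (n + 1) ≤ α n)
    (hα_div : Tendsto (fun n => ∑ i ∈ Finset.range n, α i) atTop atTop)
    (hα_to0 : Tendsto α atTop (nhds 0))
    (t : ℕ → ℝ) (ht : ∀ n, t n = ∑ i ∈ Finset.range n, α i)
    (m : ℝ → ℕ)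
    (hm_le : ∀ s : ℝ, 0 ≤ s → t (m s) ≤ s)
    (hm_max : ∀ s : ℝ, 0 ≤ s → ∀ i : ℕ, t i ≤ s → i ≤ m s)
    (hm_neg : ∀ s : ℝ, s < 0 → m s = 0)
    (T : ℝ) (hT : 0 < T)
    (Tseq : ℕ → ℝ) (hTseq0 : Tseq 0 = 0)
    (hTseq : ∀ n, Tseq (n + 1) = t (m (Tseq n + T) + 1))
    (Y : ℕ → 𝓨) (H : E → 𝓨 → E)
    (x : ℕ → E)
    (hx : ∀ n, x (n + 1) = x n + α n • H (x n) (Y (n + 1)))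
    (L : 𝓨 → ℝ) (hL_nonneg : ∀ y, 0 ≤ L y)
    (hH_lip : ∀ x₁ x₂ : E, ∀ y : 𝓨, ‖H x₁ y - H x₂ y‖ ≤ L y * ‖x₁ - x₂‖)
    (r : ℕ → ℝ) (hr : ∀ n, r n = max 1 ‖x (m (Tseq n))‖)
    (CH : ℝ) (hCH : 0 ≤ CH)
    (hH0_bound : ∀ c : ℝ, 1 ≤ c → ∀ n : ℕ, ∀ t₁ t₂ : ℝ,
      0 ≤ t₁ → t₁ ≤ t₂ → t₂ ≤ Tseq (n + 1) - Tseq n →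
        ‖∑ i ∈ Finset.Ico (m (Tseq n + t₁)) (m (Tseq n + t₂)),
            α i • (c⁻¹ • H 0 (Y (i + 1)))‖ ≤ CH)
    (hL_bound : ∀ n : ℕ, ∀ t₁ t₂ : ℝ, 0 ≤ t₁ → t₁ ≤ t₂ → t₂ ≤ Tseq (n + 1) - Tseq n →
      ∑ i ∈ Finset.Ico (m (Tseq n + t₁)) (m (Tseq n + t₂)), α i * L (Y (i + 1)) ≤ CH) :
    ∀ n : ℕ, ∀ s : ℝ, 0 ≤ s → s < T →
      ‖(r n)⁻¹ • x (m (Tseq n + s))‖ ≤ (1 + CH) * Real.exp CH := by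
  -- basic facts about t
  have ht_mono : StrictMono t := by
    apply strictMono_nat_of_lt_succ
    intro k
    rw [ht, ht, Finset.sum_range_succ]
    exact lt_add_of_pos_right _ (hα_pos k)
  have ht_nonneg : ∀ k, 0 ≤ t k := by
    intro k; rw [ht]; exact Finset.sum_nonneg fun i _ => (hα_pos i).le
  have ht0 : t 0 = 0 := by rw [ht]; simp
  have hmt : ∀ k, m (t k) = k := by
    intro k
    have h1 : k ≤ m (t k) := hm_max (t k) (ht_nonneg k) k le_rfl
    have h2 : m (t k) ≤ k := by
      by_contra h
      push_neg at h
      exact absurd (hm_le (t k) (ht_nonneg k)) (not_le.mpr (ht_mono h))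
    omega
  have hTseq_fix : ∀ n, 0 ≤ Tseq n ∧ t (m (Tseq n)) = Tseq n := by
    intro n
    induction n with
    | zero =>
      refine ⟨by rw [hTseq0], ?_⟩
      rw [hTseq0, ← ht0, hmt, ht0]
    | succ n ih =>
      rw [hTseq n]
      exact ⟨ht_nonneg _, by rw [hmt]⟩
  have hTseq_gap : ∀ n, Tseq n + T < Tseq (n + 1) := by
    intro n
    have h0 : 0 ≤ Tseq n + T := add_nonneg (hTseq_fix n).1 hT.le
    rw [hTseq n]
    by_contra h
    push_neg at h
    have := hm_max _ h0 _ h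
    omega
  intro n s hs0 hsT
  set N := m (Tseq n) with hN
  set K := m (Tseq n + s) with hK
  have hTn0 := (hTseq_fix n).1
  have hTnfix := (hTseq_fix n).2
  have hs0' : 0 ≤ Tseq n + s := add_nonneg hTn0 hs0
  have hNK : N ≤ K := hm_max _ hs0' N (by rw [hTnfix]; linarith)
  have hrn1 : 1 ≤ r n := by rw [hr]; exact le_max_left _ _
  have hrn0 : 0 < r n := lt_of_lt_of_le one_pos hrn1
  have hxN : ‖x N‖ ≤ r n := by rw [hr]; exact le_max_right _ _
  have hgap := hTseq_gap n
  have htk_mem : ∀ k, N ≤ k → k ≤ K →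
      0 ≤ t k - Tseq n ∧ t k - Tseq n ≤ Tseq (n+1) - Tseq n ∧
        m (Tseq n + (t k - Tseq n)) = k := by
    intro k h1 h2
    have e1 : Tseq n ≤ t k := by
      calc Tseq n = t N := hTnfix.symm
        _ ≤ t k := ht_mono.monotone h1
    have e2 : t k ≤ Tseq n + s := le_trans (ht_mono.monotone h2) (hm_le _ hs0')
    refine ⟨by linarith, by linarith, ?_⟩
    have e3 : Tseq n + (t k - Tseq n) = t k := by ring
    rw [e3, hmt]
  -- bound on the H0 sums
  have hH0 : ∀ k, N ≤ k → k ≤ K →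
      ‖∑ i ∈ Finset.Ico N k, α i • H 0 (Y (i+1))‖ ≤ r n * CH := by
    intro k h1 h2
    obtain ⟨e1, e2, e3⟩ := htk_mem k h1 h2
    have hb := hH0_bound (r n) hrn1 n 0 (t k - Tseq n) le_rfl e1 (by linarith)
    rw [add_zero, e3] at hb
    have heq : ∑ i ∈ Finset.Ico N k, α i • H 0 (Y (i+1)) =
        (r n) • ∑ i ∈ Finset.Ico N k, α i • ((r n)⁻¹ • H 0 (Y (i+1))) := by
      rw [Finset.smul_sum]
      refine Finset.sum_congr rfl fun i _ => ?_
      rw [smul_smul, smul_smul]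
      congr 1
      rw [mul_comm (r n) (α i), mul_assoc, mul_inv_cancel₀ (ne_of_gt hrn0), mul_one]
    rw [heq, norm_smul, Real.norm_eq_abs, abs_of_pos hrn0]
    exact mul_le_mul_of_nonneg_left hb hrn0.le
  -- unfold the recursion
  have hunfold : ∀ j, x (N + j) = x N + ∑ i ∈ Finset.Ico N (N + j), α i • H (x i) (Y (i+1)) := by
    intro j
    induction j with
    | zero => simp
    | succ j ih =>
      have hstep : N + (j + 1) = (N + j) + 1 := rfl
      rw [hstep, Finset.sum_Ico_succ_top (Nat.le_add_right N j), hx (N + j), ih]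
      abel
  -- the key per-index bound
  have hB : ∀ k, N ≤ k → k ≤ K →
      ‖x k‖ ≤ r n * (1 + CH) + ∑ i ∈ Finset.Ico N k, α i * L (Y (i+1)) * ‖x i‖ := by
    intro k h1 h2
    obtain ⟨j, rfl⟩ := Nat.exists_eq_add_of_le h1
    rw [hunfold j]
    have hsplit : ∑ i ∈ Finset.Ico N (N+j), α i • H (x i) (Y (i+1))
        = (∑ i ∈ Finset.Ico N (N+j), α i • H 0 (Y (i+1)))
          + ∑ i ∈ Finset.Ico N (N+j), α i • (H (x i) (Y (i+1)) - H 0 (Y (i+1))) := by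
      rw [← Finset.sum_add_distrib]
      refine Finset.sum_congr rfl fun i _ => ?_
      rw [← smul_add]
      congr 1
      abel
    have h2' : ‖∑ i ∈ Finset.Ico N (N+j), α i • (H (x i) (Y (i+1)) - H 0 (Y (i+1)))‖
        ≤ ∑ i ∈ Finset.Ico N (N+j), α i * L (Y (i+1)) * ‖x i‖ := by
      calc ‖∑ i ∈ Finset.Ico N (N+j), α i • (H (x i) (Y (i+1)) - H 0 (Y (i+1)))‖
          ≤ ∑ i ∈ Finset.Ico N (N+j), ‖α i • (H (x i) (Y (i+1)) - H 0 (Y (i+1)))‖ :=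
            norm_sum_le _ _
        _ ≤ ∑ i ∈ Finset.Ico N (N+j), α i * L (Y (i+1)) * ‖x i‖ := by
            refine Finset.sum_le_sum fun i _ => ?_
            rw [norm_smul, Real.norm_eq_abs, abs_of_pos (hα_pos i)]
            have := hH_lip (x i) 0 (Y (i+1))
            rw [sub_zero] at this
            calc α i * ‖H (x i) (Y (i+1)) - H 0 (Y (i+1))‖
                ≤ α i * (L (Y (i+1)) * ‖x i‖) :=
                  mul_le_mul_of_nonneg_left this (hα_pos i).le
              _ = α i * L (Y (i+1)) * ‖x i‖ := by ring
    have h1' := hH0 (N+j) h1 h2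
    calc ‖x N + ∑ i ∈ Finset.Ico N (N+j), α i • H (x i) (Y (i+1))‖
        = ‖x N + ((∑ i ∈ Finset.Ico N (N+j), α i • H 0 (Y (i+1)))
          + ∑ i ∈ Finset.Ico N (N+j), α i • (H (x i) (Y (i+1)) - H 0 (Y (i+1))))‖ := by
          rw [hsplit]
      _ ≤ ‖x N‖ + ‖(∑ i ∈ Finset.Ico N (N+j), α i • H 0 (Y (i+1)))
          + ∑ i ∈ Finset.Ico N (N+j), α i • (H (x i) (Y (i+1)) - H 0 (Y (i+1)))‖ :=
          norm_add_le _ _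
      _ ≤ ‖x N‖ + (‖∑ i ∈ Finset.Ico N (N+j), α i • H 0 (Y (i+1))‖
          + ‖∑ i ∈ Finset.Ico N (N+j), α i • (H (x i) (Y (i+1)) - H 0 (Y (i+1)))‖) := by
          gcongr
          exact norm_add_le _ _
      _ ≤ r n * (1 + CH) + ∑ i ∈ Finset.Ico N (N+j), α i * L (Y (i+1)) * ‖x i‖ := by
          linarith [h1', hxN, h2']
  -- Gronwall induction
  have hw : ∀ j, N + j ≤ K →
      r n * (1 + CH) + ∑ i ∈ Finset.Ico N (N + j), α i * L (Y (i+1)) * ‖x i‖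
        ≤ r n * (1 + CH) * Real.exp (∑ i ∈ Finset.Ico N (N + j), α i * L (Y (i+1))) := by
    intro j
    induction j with
    | zero => intro _; simp
    | succ j ih =>
      intro hj
      have hj' : N + j ≤ K := by omega
      have ih' := ih hj'
      have hstep : N + (j + 1) = (N + j) + 1 := rfl
      rw [hstep, Finset.sum_Ico_succ_top (Nat.le_add_right N j),
        Finset.sum_Ico_succ_top (Nat.le_add_right N j)]
      set a := α (N+j) * L (Y (N+j+1)) with ha_def
      have ha : 0 ≤ a := mul_nonneg (hα_pos _).le (hL_nonneg _)
      have hxb := hB (N+j) (Nat.le_add_right N j) hj'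
      set W := r n * (1 + CH) + ∑ i ∈ Finset.Ico N (N+j), α i * L (Y (i+1)) * ‖x i‖ with hW_def
      have hW0 : 0 ≤ W := by
        have : (0:ℝ) ≤ ∑ i ∈ Finset.Ico N (N+j), α i * L (Y (i+1)) * ‖x i‖ :=
          Finset.sum_nonneg fun i _ =>
            mul_nonneg (mul_nonneg (hα_pos i).le (hL_nonneg _)) (norm_nonneg _)
        nlinarith
      have hexp : (1 : ℝ) + a ≤ Real.exp a := by linarith [Real.add_one_le_exp a]
      have key : W + a * ‖x (N+j)‖ ≤ r n * (1 + CH) *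
          Real.exp ((∑ i ∈ Finset.Ico N (N+j), α i * L (Y (i+1))) + a) := by
        calc W + a * ‖x (N+j)‖ ≤ W + a * W := by nlinarith
          _ = W * (1 + a) := by ring
          _ ≤ (r n * (1 + CH) * Real.exp (∑ i ∈ Finset.Ico N (N+j), α i * L (Y (i+1))))
                * Real.exp a := by
              apply mul_le_mul ih' hexp (by linarith) (by positivity)
          _ = r n * (1 + CH) *
                Real.exp ((∑ i ∈ Finset.Ico N (N+j), α i * L (Y (i+1))) + a) := by
              rw [Real.exp_add]; ring
      linarith [key]
  have hSK : ∑ i ∈ Finset.Ico N K, α i * L (Y (i+1)) ≤ CH := by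
    have h := hL_bound n 0 s le_rfl hs0 (by linarith)
    rwa [add_zero] at h
  have hfinal : ‖x K‖ ≤ r n * ((1 + CH) * Real.exp CH) := by
    obtain ⟨j, hjK⟩ := Nat.exists_eq_add_of_le hNK
    calc ‖x K‖ ≤ r n * (1 + CH) + ∑ i ∈ Finset.Ico N K, α i * L (Y (i+1)) * ‖x i‖ :=
          hB K hNK le_rfl
      _ ≤ r n * (1 + CH) * Real.exp (∑ i ∈ Finset.Ico N K, α i * L (Y (i+1))) := by
          rw [hjK]; exact hw j (by omega)
      _ ≤ r n * (1 + CH) * Real.exp CH := by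
          apply mul_le_mul_of_nonneg_left (Real.exp_le_exp.mpr hSK) (by positivity)
      _ = r n * ((1 + CH) * Real.exp CH) := by ring
  rw [norm_smul, Real.norm_eq_abs, abs_of_pos (inv_pos.mpr hrn0)]
  have hinv : (r n)⁻¹ * r n = 1 := inv_mul_cancel₀ (ne_of_gt hrn0)
  calc (r n)⁻¹ * ‖x K‖ ≤ (r n)⁻¹ * (r n * ((1 + CH) * Real.exp CH)) := by
        apply mul_le_mul_of_nonneg_left hfinal (by positivity)
    _ = (1 + CH) * Real.exp CH := by rw [← mul_assoc, hinv, one_mul]
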